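/- Let $(\Omega,\mathcal{F},\mathbb{F})$ be a filtered space, $(\Omega',\mathcal{G},\mathbb{P})$ a probability space, and $A$ a Polish space. If $X:[0,T]\times\Omega\times\Omega'\to A$ is $\mathbb{F}\otimes\mathcal{G}$-predictable (predictable for the filtration $(\mathcal{F}_t\otimes\mathcal{G})_t$ on $\Omega\times\Omega'$), then the process $Y:[0,T]\times\Omega\to L^0(\Omega',\mathcal{G},\mathbb{P};A)$ defined by $Y_t(\omega)=[X_t(\omega,\cdot)]$ (the $\mathbb{P}$-equivalence class) is $\mathbb{F}$-predictable, where $L^0(\Omega',\mathcal{G},\mathbb{P};A)$ is equipped with the topology of convergence in probability. -/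
import Mathlib


open Set MeasureTheory

/-- The predictable σ-algebra on `[0,T] × Ω` (viewed inside `ℝ × Ω`) associated with a
filtration `F`. -/
def predSigma {Ω : Type*} (T : ℝ) (F : ℝ → MeasurableSpace Ω) : MeasurableSpace (ℝ × Ω) :=
  MeasurableSpace.generateFrom
    ({S | ∃ t₁ t₂ : ℝ, 0 ≤ t₁ ∧ t₁ < t₂ ∧ t₂ ≤ T ∧
        ∃ B : Set Ω, MeasurableSet[F t₁] B ∧ S = Ioc t₁ t₂ ×ˢ B} ∪
     {S | ∃ B : Set Ω, MeasurableSet[F 0] B ∧ S = ({(0 : ℝ)} : Set ℝ) ×ˢ B})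

/-- The Borel σ-algebra of the metric `ρ̂(f,g) = 𝔼[ρ(f,g)]` of convergence in probability
on `L⁰(Ω',𝒢,ℙ;A)` (realised as the space `Ω' →ₘ[μ] A` of a.e.-equivalence classes),
generated by the open balls of `ρ̂`. -/
noncomputable def L0sigma {Ω' : Type*} [MeasurableSpace Ω'] (μ : MeasureTheory.Measure Ω')
    (A : Type*) [MetricSpace A] : MeasurableSpace (Ω' →ₘ[μ] A) :=
  MeasurableSpace.generateFrom
    {s | ∃ (f : Ω' →ₘ[μ] A) (r : ℝ), s = {g | ∫ ω, dist (f ω) (g ω) ∂μ < r}}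

/-- If `X : [0,T] × Ω × Ω' → A` is predictable for the filtration `(𝒻_t ⊗ 𝒢)_t`, then the
process `Y : [0,T] × Ω → L⁰(Ω',𝒢,ℙ;A)` of equivalence classes `Y_t(ω) = [X_t(ω,·)]` is
`𝔽`-predictable, where `L⁰` carries (the Borel σ-algebra of) the metric
`ρ̂(φ¹,φ²) = 𝔼[ρ(φ¹,φ²)]` of convergence in probability. -/
theorem stmt1 {Ω Ω' A : Type*} [MetricSpace A] [PolishSpace A] [MeasurableSpace A]
    [BorelSpace A] (hρ : ∀ x y : A, dist x y < 1)
    [mΩ' : MeasurableSpace Ω'] (μ : MeasureTheory.Measure Ω') [IsProbabilityMeasure μ]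
    (T : ℝ) (F : ℝ → MeasurableSpace Ω)
    (X : ℝ × (Ω × Ω') → A)
    (hX : Measurable[predSigma T (fun t => (F t).prod mΩ')] X)
    (Y : ℝ × Ω → (Ω' →ₘ[μ] A))
    (hY : ∀ t ω, (Y (t, ω) : Ω' → A) =ᵐ[μ] fun ω' => X (t, (ω, ω'))) :
    @Measurable _ _ (predSigma T F) (L0sigma μ A) Y := by
  letI mP : MeasurableSpace (ℝ × Ω) := predSigma T F
  set e : (ℝ × Ω) × Ω' → ℝ × (Ω × Ω') := fun q => (q.1.1, (q.1.2, q.2)) with he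
  -- key: pull back generators of the product predictable σ-algebra
  have key : ∀ (J : Set ℝ) (t : ℝ),
      (∀ B : Set Ω, MeasurableSet[F t] B → MeasurableSet[predSigma T F] (J ×ˢ B)) →
      ∀ D : Set (Ω × Ω'), MeasurableSet[(F t).prod mΩ'] D →
      MeasurableSet (e ⁻¹' (J ×ˢ D)) := by
    intro J t hJ D hD
    have huniv : MeasurableSet (e ⁻¹' (J ×ˢ (univ : Set (Ω × Ω')))) := by
      have h1 : e ⁻¹' (J ×ˢ (univ : Set (Ω × Ω')))
          = (J ×ˢ (univ : Set Ω)) ×ˢ (univ : Set Ω') := by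
        ext q; simp [e, Set.mem_prod]
      rw [h1]
      exact (hJ univ MeasurableSet.univ).prod MeasurableSet.univ
    have hD' : MeasurableSet[MeasurableSpace.generateFrom
        (image2 (· ×ˢ ·) { s : Set Ω | MeasurableSet[F t] s }
          { s : Set Ω' | MeasurableSet s })] D := by
      rw [@generateFrom_prod _ _ (F t) mΩ']; exact hD
    clear hD
    induction D, hD' using MeasurableSpace.generateFrom_induction with
    | hC s hs _ =>
      obtain ⟨B, hB, C, hC, rfl⟩ := hs
      have h1 : e ⁻¹' (J ×ˢ (B ×ˢ C)) = (J ×ˢ B) ×ˢ C := by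
        ext q; simp [e, Set.mem_prod]; tauto
      rw [h1]
      exact (hJ B hB).prod hC
    | empty => simp
    | compl s hs ih =>
      have h2 : e ⁻¹' (J ×ˢ sᶜ)
          = e ⁻¹' (J ×ˢ (univ : Set (Ω × Ω'))) \ e ⁻¹' (J ×ˢ s) := by
        ext q; simp [e, Set.mem_prod]; tauto
      rw [h2]
      exact huniv.diff ih
    | iUnion s hs ih =>
      have h3 : e ⁻¹' (J ×ˢ (⋃ i, s i)) = ⋃ i, e ⁻¹' (J ×ˢ s i) := by
        ext q; simp [e, Set.mem_prod]
      rw [h3]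
      exact MeasurableSet.iUnion ih
  have hE : @Measurable _ _ (mP.prod mΩ')
      (predSigma T (fun t => (F t).prod mΩ')) e :=
    @measurable_generateFrom _ _ (mP.prod mΩ') _ e (by
      rintro S (⟨t₁, t₂, h0, h12, h2T, D, hD, rfl⟩ | ⟨D, hD, rfl⟩)
      · exact key (Ioc t₁ t₂) t₁
          (fun B hB => MeasurableSpace.measurableSet_generateFrom
            (Or.inl ⟨t₁, t₂, h0, h12, h2T, B, hB, rfl⟩)) D hD
      · exact key {0} 0
          (fun B hB => MeasurableSpace.measurableSet_generateFrom
            (Or.inr ⟨B, hB, rfl⟩)) D hD)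
  have hXe : @Measurable _ _ (mP.prod mΩ') _ (fun q => X (e q)) := hX.comp hE
  apply measurable_generateFrom
  rintro s ⟨f, r, rfl⟩
  have hG : StronglyMeasurable
      (fun p : ℝ × Ω => ∫ ω', dist (f ω') (X (p.1, (p.2, ω'))) ∂μ) := by
    have hin : StronglyMeasurable
        (fun q : (ℝ × Ω) × Ω' => dist (f q.2) (X (e q))) :=
      ((f.stronglyMeasurable.measurable.comp measurable_snd).dist hXe).stronglyMeasurable
    exact hin.integral_prod_right'
  have hset : Y ⁻¹' {g | ∫ ω, dist (f ω) (g ω) ∂μ < r}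
      = (fun p : ℝ × Ω => ∫ ω', dist (f ω') (X (p.1, (p.2, ω'))) ∂μ) ⁻¹' Iio r := by
    ext ⟨t, ω⟩
    simp only [mem_preimage, mem_setOf_eq, mem_Iio]
    rw [integral_congr_ae ((hY t ω).mono fun ω' h => by rw [h])]
  rw [hset]
  exact hG.measurable measurableSet_Iio
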